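/- There is an absolute constant c > 0 with the following property. Let (Ω, 𝓕, P) be a probability space with a filtration (𝓕_k)_{k≥0}, and let (d_k)_{k≥1} be a martingale difference sequence in L¹(Ω, P), i.e. each d_k is 𝓕_k-measurable and integrable with E[d_k | 𝓕_{k−1}] = 0 for k ≥ 2. Then for every choice of signs ε_k ∈ {−1, +1}, every n ≥ 1 and every t > 0, t · P( |Σ_{k=1}^n ε_k d_k| > t ) ≤ c · sup_{m≥1} ‖ Σ_{k=1}^m d_k ‖_{L¹}. (Weak type (1,1) inequality for martingale transforms by signs.) -/

import Mathlib

open MeasureTheory ENNReal Filter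
universe u
noncomputable def Ub (x y : ℝ) : ℝ := if |x| + |y| ≤ 1 then y^2 - x^2 else 1 - 2*|x|

/-- Sub-gradient for `Ub` along lines of slope `e = ±1`. -/
noncomputable def phiB (e x y : ℝ) : ℝ :=
  if |x| + |y| ≤ 1 then 2*(e*y - x) else (if 0 ≤ x then -2 else 2)

lemma Ub_meas : Measurable fun p : ℝ × ℝ => Ub p.1 p.2 := by
  unfold Ub
  exact Measurable.ite
    (measurableSet_le (measurable_fst.abs.add measurable_snd.abs) measurable_const)
    (by fun_prop) (by fun_prop)

lemma phiB_meas (e : ℝ) : Measurable fun p : ℝ × ℝ => phiB e p.1 p.2 := by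
  unfold phiB
  refine Measurable.ite
    (measurableSet_le (measurable_fst.abs.add measurable_snd.abs) measurable_const)
    (by fun_prop) ?_
  exact Measurable.ite (measurableSet_le measurable_const measurable_fst)
    measurable_const measurable_const

lemma abs_Ub_le (x y : ℝ) : |Ub x y| ≤ 1 + 2*|x| := by
  unfold Ub
  have hx := abs_nonneg x; have hy := abs_nonneg y
  have hx2 := sq_abs x; have hy2 := sq_abs y
  split_ifs with h
  · rw [abs_le]; constructor <;> nlinarith
  · rw [abs_le]; constructor <;> nlinarith

lemma abs_phiB_le (e x y : ℝ) (he : e = 1 ∨ e = -1) : |phiB e x y| ≤ 2 := by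
  unfold phiB
  have hx := abs_nonneg x
  split_ifs with h h2
  · have h1 : |e*y - x| ≤ |e*y| + |x| := abs_sub (e*y) x
    have h3 : |e*y| = |y| := by rcases he with rfl | rfl <;> simp
    rw [abs_mul, abs_two]
    nlinarith [abs_nonneg (e*y - x)]
  · norm_num
  · norm_num

lemma Ub_diag (e x : ℝ) (he : e = 1 ∨ e = -1) : Ub x (e*x) ≤ 0 := by
  unfold Ub
  have h3 : |e*x| = |x| := by rcases he with rfl | rfl <;> simp
  have he2 : e*e = 1 := by rcases he with rfl | rfl <;> norm_num
  rw [h3]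
  split_ifs with h
  · nlinarith
  · nlinarith [abs_nonneg x]

lemma V_le_Ub (x y : ℝ) : (if 1 < |y| then (1:ℝ) else 0) - 2*|x| ≤ Ub x y := by
  unfold Ub
  have hx := abs_nonneg x; have hy := abs_nonneg y
  have hx2 := sq_abs x; have hy2 := sq_abs y
  split_ifs <;> nlinarith [sq_nonneg y, sq_nonneg x]

/-- Key pointwise concavity inequality for Burkholder's function. -/
lemma Ub_step (e x y h : ℝ) (he : e = 1 ∨ e = -1) :
    Ub (x + h) (y + e*h) ≤ Ub x y + h * phiB e x y := by
  have he2 : e*e = 1 := by rcases he with rfl | rfl <;> norm_num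
  have hae : ∀ z : ℝ, |e*z| = |z| := by intro z; rcases he with rfl | rfl <;> simp
  have he2' : e^2 = 1 := by rcases he with rfl | rfl <;> norm_num
  have hQ : (y + e*h)^2 - (x + h)^2 = y^2 - x^2 + h * (2*(e*y - x)) := by
    linear_combination h^2 * he2'
  unfold Ub phiB
  by_cases c1 : |x| + |y| ≤ 1
  · rw [if_pos c1, if_pos c1]
    by_cases c2 : |x + h| + |y + e*h| ≤ 1
    · rw [if_pos c2]; linarith [hQ]
    · rw [if_neg c2]
      -- need 1 - 2|x+h| ≤ (y+eh)^2 - (x+h)^2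
      have key : 1 - 2*|x + h| ≤ (y + e*h)^2 - (x + h)^2 := by
        set s := x + h; set r := y + e*h
        have hs2 := sq_abs s; have hr2 := sq_abs r
        have h1 : 1 < |s| + |r| := not_le.mp c2
        have hdiff : s - e*r = x - e*y := by
          simp only [s, r]; linear_combination (-h) * he2'
        have h4 : |s| - |e*r| ≤ |s - e*r| := abs_sub_abs_le_abs_sub s (e*r)
        have h5 : |x - e*y| ≤ |x| + |e*y| := abs_sub x (e*y)
        have h6 : |e*y| = |y| := hae y
        have h7 : |s| - |r| ≤ 1 := by rw [hdiff] at h4; rw [hae r] at h4; linarith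
        nlinarith [abs_nonneg s, abs_nonneg r]
      linarith [hQ, key]
  · rw [if_neg c1, if_neg c1]
    set s0 : ℝ := if 0 ≤ x then (1:ℝ) else -1 with hs0
    have hs0x : s0 * x = |x| := by
      simp only [hs0]; split_ifs with hx0
      · rw [abs_of_nonneg hx0]; ring
      · rw [abs_of_neg (not_le.mp hx0)]; ring
    have hphi : (if 0 ≤ x then (-2:ℝ) else 2) = -2 * s0 := by
      simp only [hs0]; split_ifs <;> ring
    rw [hphi]
    have hbd : |x| + s0 * h ≤ |x + h| := by
      have : s0 * (x + h) ≤ |s0 * (x+h)| := le_abs_self _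
      have habs : |s0 * (x+h)| = |x+h| := by
        have hs1 : |s0| = 1 := by simp only [hs0]; split_ifs <;> simp
        rw [abs_mul, hs1, one_mul]
      nlinarith [this, habs, hs0x]
    by_cases c2 : |x + h| + |y + e*h| ≤ 1
    · rw [if_pos c2]
      have hs2 := sq_abs (x+h); have hr2 := sq_abs (y + e*h)
      have : (y + e*h)^2 - (x+h)^2 ≤ 1 - 2*|x+h| := by
        nlinarith [abs_nonneg (x+h), abs_nonneg (y+e*h)]
      nlinarith
    · rw [if_neg c2]; nlinarith

/-- The normalized (t = 1) weak type inequality. -/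
lemma burkholder_key {Ω : Type u} [m0 : MeasurableSpace Ω] (P : Measure Ω)
    [IsProbabilityMeasure P]
    (ℱ : ℕ → MeasurableSpace Ω) (hle : ∀ k, ℱ k ≤ m0) (hmono : Monotone ℱ)
    (d : ℕ → Ω → ℝ)
    (hmeas : ∀ k, 1 ≤ k → StronglyMeasurable[ℱ k] (d k))
    (hint : ∀ k, 1 ≤ k → Integrable (d k) P)
    (hcond : ∀ k, 2 ≤ k → P[d k|ℱ (k-1)] =ᵐ[P] 0)
    (ε : ℕ → ℝ) (hε : ∀ k, ε k = 1 ∨ ε k = -1)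
    (n : ℕ) (hn : 1 ≤ n) :
    (P {ω | 1 < |∑ k ∈ Finset.Icc 1 n, ε k * d k ω|}).toReal
      ≤ 2 * ∫ ω, |∑ k ∈ Finset.Icc 1 n, d k ω| ∂P := by
  set F : ℕ → Ω → ℝ := fun m ω => ∑ k ∈ Finset.Icc 1 m, d k ω with hF
  set G : ℕ → Ω → ℝ := fun m ω => ∑ k ∈ Finset.Icc 1 m, ε k * d k ω with hG
  -- strong measurability of partial sums with respect to ℱ m
  have hFsm : ∀ m, StronglyMeasurable[ℱ m] (F m) := by
    intro m
    apply Finset.stronglyMeasurable_fun_sum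
    intro k hk
    rw [Finset.mem_Icc] at hk
    exact (hmeas k hk.1).mono (hmono hk.2)
  have hGsm : ∀ m, StronglyMeasurable[ℱ m] (G m) := by
    intro m
    apply Finset.stronglyMeasurable_fun_sum
    intro k hk
    rw [Finset.mem_Icc] at hk
    exact (stronglyMeasurable_const.mul (hmeas k hk.1)).mono (hmono hk.2)
  have hFm : ∀ m, Measurable (F m) := fun m => ((hFsm m).mono (hle m)).measurable
  have hGm : ∀ m, Measurable (G m) := fun m => ((hGsm m).mono (hle m)).measurable
  have hFi : ∀ m, Integrable (F m) P := by
    intro m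
    apply integrable_finset_sum
    intro k hk
    rw [Finset.mem_Icc] at hk
    exact hint k hk.1
  have hGi : ∀ m, Integrable (G m) P := by
    intro m
    apply integrable_finset_sum
    intro k hk
    rw [Finset.mem_Icc] at hk
    exact (hint k hk.1).const_mul _
  -- integrability of Ub (F m) (G m)
  have hUi : ∀ m, Integrable (fun ω => Ub (F m ω) (G m ω)) P := by
    intro m
    refine Integrable.mono' ((integrable_const (1:ℝ)).add ((hFi m).abs.const_mul 2)) ?_ ?_
    · exact (Ub_meas.comp ((hFm m).prodMk (hGm m))).aestronglyMeasurable
    · filter_upwards with ω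
      simpa [Real.norm_eq_abs] using abs_Ub_le (F m ω) (G m ω)
  -- the supermartingale property of Ub (F, G)
  have hmain : ∀ m, 1 ≤ m → ∫ ω, Ub (F m ω) (G m ω) ∂P ≤ 0 := by
    intro m hm
    induction m, hm using Nat.le_induction with
    | base =>
      apply integral_nonpos
      intro ω
      show Ub (F 1 ω) (G 1 ω) ≤ (0:ℝ)
      have : F 1 ω = d 1 ω ∧ G 1 ω = ε 1 * d 1 ω := by
        constructor <;> simp [hF, hG]
      rw [this.1, this.2]
      exact Ub_diag (ε 1) (d 1 ω) (hε 1)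
    | succ m hm ih =>
      have hsplitF : ∀ ω, F (m+1) ω = F m ω + d (m+1) ω := by
        intro ω; exact Finset.sum_Icc_succ_top (by omega) _
      have hsplitG : ∀ ω, G (m+1) ω = G m ω + ε (m+1) * d (m+1) ω := by
        intro ω; exact Finset.sum_Icc_succ_top (by omega) _
      set Φ : Ω → ℝ := fun ω => phiB (ε (m+1)) (F m ω) (G m ω) with hΦ
      have hΦsm : StronglyMeasurable[ℱ m] Φ :=
        ((phiB_meas (ε (m+1))).comp
          ((hFsm m).measurable.prodMk (hGsm m).measurable)).stronglyMeasurable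
      have hΦm : Measurable Φ := (hΦsm.mono (hle m)).measurable
      have hΦbd : ∀ ω, |Φ ω| ≤ 2 := fun ω => abs_phiB_le _ _ _ (hε (m+1))
      have hprodInt : Integrable (Φ * d (m+1)) P := by
        refine Integrable.mono' ((hint (m+1) (by omega)).abs.const_mul 2) ?_ ?_
        · exact (hΦm.mul (((hmeas (m+1) (by omega)).mono
            (hle (m+1))).measurable)).aestronglyMeasurable
        · filter_upwards with ω
          rw [Real.norm_eq_abs, Pi.mul_apply, abs_mul]
          have := abs_nonneg (d (m+1) ω)
          nlinarith [hΦbd ω, abs_nonneg (Φ ω)]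
      -- the conditional expectation step
      haveI : SigmaFinite (P.trim (hle m)) := by infer_instance
      have hzero : ∫ ω, (Φ * d (m+1)) ω ∂P = 0 := by
        rw [← integral_condExp (hle m)]
        have h1 : P[Φ * d (m+1)|ℱ m] =ᵐ[P] Φ * P[d (m+1)|ℱ m] :=
          condExp_mul_of_stronglyMeasurable_left hΦsm hprodInt (hint (m+1) (by omega))
        have h2 : P[d (m+1)|ℱ m] =ᵐ[P] 0 := by
          have := hcond (m+1) (by omega)
          simpa using this
        calc ∫ ω, (P[Φ * d (m+1)|ℱ m]) ω ∂P
            = ∫ ω, (0:ℝ) ∂P := by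
              apply integral_congr_ae
              filter_upwards [h1, h2] with ω hω1 hω2
              rw [hω1, Pi.mul_apply, hω2]; simp
          _ = 0 := by simp
      -- putting it together
      have hstep : ∫ ω, Ub (F (m+1) ω) (G (m+1) ω) ∂P
          ≤ ∫ ω, (Ub (F m ω) (G m ω) + (Φ * d (m+1)) ω) ∂P := by
        apply integral_mono (hUi (m+1)) ((hUi m).add hprodInt)
        intro ω
        simp only [Pi.add_apply, Pi.mul_apply]
        rw [hsplitF ω, hsplitG ω]
        have := Ub_step (ε (m+1)) (F m ω) (G m ω) (d (m+1) ω) (hε (m+1))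
        calc Ub (F m ω + d (m+1) ω) (G m ω + ε (m+1) * d (m+1) ω)
            ≤ Ub (F m ω) (G m ω) + d (m+1) ω * phiB (ε (m+1)) (F m ω) (G m ω) := this
          _ = Ub (F m ω) (G m ω) + Φ ω * d (m+1) ω := by rw [hΦ]; ring
      rw [integral_add (hUi m) hprodInt] at hstep
      linarith [hstep, ih, le_of_eq hzero]
  -- conclusion
  have hS : MeasurableSet {ω | 1 < |G n ω|} :=
    measurableSet_lt measurable_const (hGm n).abs
  have hind : (P {ω | 1 < |G n ω|}).toReal
      = ∫ ω, ({ω | 1 < |G n ω|}).indicator (fun _ => (1:ℝ)) ω ∂P := by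
    rw [show ({ω | 1 < |G n ω|}).indicator (fun _ => (1:ℝ))
        = ({ω | 1 < |G n ω|}).indicator 1 from rfl]
    exact (integral_indicator_one hS).symm
  have hVle : ∫ ω, (({ω | 1 < |G n ω|}).indicator (fun _ => (1:ℝ)) ω - 2 * |F n ω|) ∂P
      ≤ ∫ ω, Ub (F n ω) (G n ω) ∂P := by
    apply integral_mono
      (((integrable_const (1:ℝ)).indicator hS).sub ((hFi n).abs.const_mul 2)) (hUi n)
    intro ω
    have := V_le_Ub (F n ω) (G n ω)
    simp only [Pi.sub_apply, Set.indicator_apply, Set.mem_setOf_eq]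
    simpa using this
  rw [integral_sub ((integrable_const (1:ℝ)).indicator hS) ((hFi n).abs.const_mul 2),
    integral_const_mul] at hVle
  have := hmain n hn
  show (P {ω | 1 < |G n ω|}).toReal ≤ 2 * ∫ ω, |F n ω| ∂P
  rw [hind]
  linarith

/-- Weak type (1,1) inequality for martingale transforms by signs: there is an absolute
constant `c > 0` such that for every martingale difference sequence `(d_k)_{k≥1}` in `L¹`
of a probability space, every choice of signs `ε_k ∈ {−1, +1}`, every `n ≥ 1` and `t > 0`,
`t · P(|∑_{k=1}^n ε_k d_k| > t) ≤ c · sup_{m≥1} ‖∑_{k=1}^m d_k‖_{L¹}`. -/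
theorem weak_type_one_one_martingale_sign_transform :
    ∃ c : ℝ, 0 < c ∧
      ∀ (Ω : Type u) [m0 : MeasurableSpace Ω] (P : Measure Ω), IsProbabilityMeasure P →
        ∀ (ℱ : ℕ → MeasurableSpace Ω), (∀ k, ℱ k ≤ m0) → Monotone ℱ →
          ∀ d : ℕ → Ω → ℝ,
            (∀ k, 1 ≤ k → StronglyMeasurable[ℱ k] (d k)) →
            (∀ k, 1 ≤ k → Integrable (d k) P) →
            (∀ k, 2 ≤ k → P[d k|ℱ (k - 1)] =ᵐ[P] 0) →
            ∀ ε : ℕ → ℝ, (∀ k, ε k = 1 ∨ ε k = -1) →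
              ∀ n, 1 ≤ n → ∀ t : ℝ, 0 < t →
                ENNReal.ofReal t * P {ω | t < |∑ k ∈ Finset.Icc 1 n, ε k * d k ω|}
                  ≤ ENNReal.ofReal c *
                      ⨆ m : ℕ, ENNReal.ofReal (∫ ω, |∑ k ∈ Finset.Icc 1 (m + 1), d k ω| ∂P) := by
  refine ⟨2, by norm_num, ?_⟩
  intro Ω m0 P hP ℱ hle hmono d hmeas hint hcond ε hε n hn t ht
  haveI := hP
  -- normalized differences
  set D : ℕ → Ω → ℝ := fun k ω => t⁻¹ * d k ω with hD
  have hmeasD : ∀ k, 1 ≤ k → StronglyMeasurable[ℱ k] (D k) := fun k hk =>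
    stronglyMeasurable_const.mul (hmeas k hk)
  have hintD : ∀ k, 1 ≤ k → Integrable (D k) P := fun k hk => (hint k hk).const_mul _
  have hcondD : ∀ k, 2 ≤ k → P[D k|ℱ (k-1)] =ᵐ[P] 0 := by
    intro k hk
    have h1 : P[D k|ℱ (k-1)] =ᵐ[P] t⁻¹ • P[d k|ℱ (k-1)] := by
      have := condExp_smul (μ := P) (m := ℱ (k-1)) (t⁻¹ : ℝ) (d k)
      exact this
    filter_upwards [h1, hcond k hk] with ω hω1 hω2
    rw [hω1, Pi.smul_apply, hω2]
    simp
  have hkey := burkholder_key P ℱ hle hmono D hmeasD hintD hcondD ε hε n hn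
  -- rewrite the set and the integral
  have hsumD : ∀ ω, ∑ k ∈ Finset.Icc 1 n, ε k * D k ω
      = t⁻¹ * ∑ k ∈ Finset.Icc 1 n, ε k * d k ω := by
    intro ω; rw [Finset.mul_sum]; apply Finset.sum_congr rfl; intro k _; simp [hD]; ring
  have hsumD' : ∀ ω, ∑ k ∈ Finset.Icc 1 n, D k ω
      = t⁻¹ * ∑ k ∈ Finset.Icc 1 n, d k ω := by
    intro ω; rw [Finset.mul_sum]
  have hset : {ω | 1 < |∑ k ∈ Finset.Icc 1 n, ε k * D k ω|}
      = {ω | t < |∑ k ∈ Finset.Icc 1 n, ε k * d k ω|} := by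
    ext ω
    simp only [Set.mem_setOf_eq, hsumD ω, abs_mul, abs_inv, abs_of_pos ht]
    rw [← div_eq_inv_mul, lt_div_iff₀ ht, one_mul]
  have hintEq : ∫ ω, |∑ k ∈ Finset.Icc 1 n, D k ω| ∂P
      = t⁻¹ * ∫ ω, |∑ k ∈ Finset.Icc 1 n, d k ω| ∂P := by
    rw [← integral_const_mul]
    apply integral_congr_ae
    filter_upwards with ω
    rw [hsumD' ω, abs_mul, abs_inv, abs_of_pos ht]
  rw [hset, hintEq] at hkey
  -- from real inequality to ENNReal inequality
  set S := {ω | t < |∑ k ∈ Finset.Icc 1 n, ε k * d k ω|} with hSdef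
  set I := ∫ ω, |∑ k ∈ Finset.Icc 1 n, d k ω| ∂P with hIdef
  have hI0 : 0 ≤ I := integral_nonneg fun ω => abs_nonneg _
  have hreal : t * (P S).toReal ≤ 2 * I := by
    have h2 : t * (P S).toReal ≤ t * (2 * (t⁻¹ * I)) :=
      mul_le_mul_of_nonneg_left hkey ht.le
    have h3 : t * (2 * (t⁻¹ * I)) = 2 * I := by
      field_simp
    linarith
  have hfin : P S ≠ ⊤ := measure_ne_top _ _
  have hstep1 : ENNReal.ofReal t * P S = ENNReal.ofReal (t * (P S).toReal) := by
    rw [ENNReal.ofReal_mul ht.le, ENNReal.ofReal_toReal hfin]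
  rw [hstep1]
  have hstep2 : ENNReal.ofReal (t * (P S).toReal) ≤ ENNReal.ofReal (2 * I) :=
    ENNReal.ofReal_le_ofReal hreal
  refine hstep2.trans ?_
  rw [ENNReal.ofReal_mul (by norm_num : (0:ℝ) ≤ 2)]
  apply mul_le_mul_right
  have hn' : (n - 1) + 1 = n := Nat.succ_pred_eq_of_pos hn
  have := le_iSup (fun m : ℕ =>
    ENNReal.ofReal (∫ ω, |∑ k ∈ Finset.Icc 1 (m + 1), d k ω| ∂P)) (n - 1)
  rwa [hn'] at this
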